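/- Let g(x) = x + C(x) where C is a 1/k-Cantor function (k ≥ 2) which is Hölder continuous with exponent α, and define φ(x,y) = (g(x), y) on [0,1]². If q(1 − α) < 1, then ∑_{k'=0}^∞ ∑_j 2^{-(3−q)k'} H¹(φ(∂Q̃_{k',j}))^q < ∞, where Q̃_{k',j} are the dyadic squares of [0,1]² of generation k'. Moreover φ is a homeomorphism of [0,1]² onto its image which does not belong to W^{1,1}_{loc}([0,1]², ℝ²). -/

import Mathlib

open MeasureTheory
open scoped NNReal ENNReal

noncomputable section

/-- The closed dyadic square of generation `k` with lower-left lattice corner `(i/2^k, j/2^k)`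
inside `[0,1]²`. -/
def dyadicSq (k : ℕ) (i j : ℕ) : Set (ℝ × ℝ) :=
  Set.Icc ((i : ℝ) / 2 ^ k) (((i : ℝ) + 1) / 2 ^ k) ×ˢ
    Set.Icc ((j : ℝ) / 2 ^ k) (((j : ℝ) + 1) / 2 ^ k)

/-- Absolute continuity of a real function on `[a,b]` (via finitely many nonoverlapping
subintervals). -/
def AbsContOn (f : ℝ → ℝ) (a b : ℝ) : Prop :=
  ∀ ε > (0 : ℝ), ∃ δ > (0 : ℝ), ∀ (n : ℕ) (u v : ℕ → ℝ),
    (∀ i < n, a ≤ u i ∧ u i ≤ v i ∧ v i ≤ b) →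
    (∀ i, i + 1 < n → v i ≤ u (i + 1)) →
    (∑ i ∈ Finset.range n, (v i - u i)) < δ →
    (∑ i ∈ Finset.range n, |f (v i) - f (u i)|) < ε

lemma horizSeg (p r c : ℝ) :
    μH[1] ((Set.Icc p r ×ˢ ({c} : Set ℝ)) : Set (ℝ × ℝ)) ≤ ENNReal.ofReal (r - p) := by
  have h : (Set.Icc p r ×ˢ ({c} : Set ℝ)) = (fun t : ℝ => (t, c)) '' Set.Icc p r := by
    ext ⟨x, y⟩; simp [Set.mem_prod, eq_comm, and_comm]
  rw [h]
  calc μH[1] ((fun t : ℝ => (t, c)) '' Set.Icc p r)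
      ≤ (1 : ℝ≥0∞) ^ (1:ℝ) * μH[1] (Set.Icc p r) :=
        (LipschitzWith.prodMk_right c).hausdorffMeasure_image_le zero_le_one _
    _ = ENNReal.ofReal (r - p) := by
        rw [MeasureTheory.hausdorffMeasure_real]
        simp [Real.volume_Icc]

lemma vertSeg (p r c : ℝ) :
    μH[1] ((({c} : Set ℝ) ×ˢ Set.Icc p r) : Set (ℝ × ℝ)) ≤ ENNReal.ofReal (r - p) := by
  have h : (({c} : Set ℝ) ×ˢ Set.Icc p r) = (fun t : ℝ => (c, t)) '' Set.Icc p r := by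
    ext ⟨x, y⟩; simp [Set.mem_prod, eq_comm, and_comm]
  rw [h]
  calc μH[1] ((fun t : ℝ => (c, t)) '' Set.Icc p r)
      ≤ (1 : ℝ≥0∞) ^ (1:ℝ) * μH[1] (Set.Icc p r) :=
        (LipschitzWith.prodMk_left c).hausdorffMeasure_image_le zero_le_one _
    _ = ENNReal.ofReal (r - p) := by
        rw [MeasureTheory.hausdorffMeasure_real]
        simp [Real.volume_Icc]

lemma frontier_image_bound (g : ℝ → ℝ) (hg : MonotoneOn g (Set.Icc 0 1))
    (a b c d : ℝ) (hab : a ≤ b) (hcd : c ≤ d) (ha : a ∈ Set.Icc (0:ℝ) 1)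
    (hb : b ∈ Set.Icc (0:ℝ) 1) :
    μH[1] ((fun p : ℝ × ℝ => (g p.1, p.2)) '' frontier (Set.Icc a b ×ˢ Set.Icc c d)) ≤
      ENNReal.ofReal (2 * (g b - g a) + 2 * (d - c)) := by
  have hmem : ∀ x, a ≤ x → x ≤ b → x ∈ Set.Icc (0:ℝ) 1 :=
    fun x h1 h2 => ⟨le_trans ha.1 h1, le_trans h2 hb.2⟩
  have hfr : frontier (Set.Icc a b ×ˢ Set.Icc c d) ⊆
      Set.Icc a b ×ˢ ({c, d} : Set ℝ) ∪ ({a, b} : Set ℝ) ×ˢ Set.Icc c d := by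
    rw [frontier_prod_eq, closure_Icc, closure_Icc, frontier_Icc hab, frontier_Icc hcd]
  have hsub : (fun p : ℝ × ℝ => (g p.1, p.2)) '' frontier (Set.Icc a b ×ˢ Set.Icc c d) ⊆
      ((Set.Icc (g a) (g b) ×ˢ ({c} : Set ℝ)) ∪ (Set.Icc (g a) (g b) ×ˢ ({d} : Set ℝ))) ∪
      ((({g a} : Set ℝ) ×ˢ Set.Icc c d) ∪ (({g b} : Set ℝ) ×ˢ Set.Icc c d)) := by
    rintro _ ⟨⟨x, y⟩, hxy, rfl⟩
    rcases hfr hxy with ⟨hx, hy⟩ | ⟨hx, hy⟩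
    · have hgx : g x ∈ Set.Icc (g a) (g b) :=
        ⟨hg ha (hmem x hx.1 hx.2) hx.1, hg (hmem x hx.1 hx.2) hb hx.2⟩
      rcases hy with rfl | rfl
      · exact Or.inl (Or.inl ⟨hgx, rfl⟩)
      · exact Or.inl (Or.inr ⟨hgx, rfl⟩)
    · rcases hx with rfl | rfl
      · exact Or.inr (Or.inl ⟨rfl, hy⟩)
      · exact Or.inr (Or.inr ⟨rfl, hy⟩)
  have hga : g a ≤ g b := hg ha hb hab
  calc μH[1] ((fun p : ℝ × ℝ => (g p.1, p.2)) '' frontier (Set.Icc a b ×ˢ Set.Icc c d))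
      ≤ μH[1] (((Set.Icc (g a) (g b) ×ˢ ({c} : Set ℝ)) ∪ (Set.Icc (g a) (g b) ×ˢ ({d} : Set ℝ))) ∪
        ((({g a} : Set ℝ) ×ˢ Set.Icc c d) ∪ (({g b} : Set ℝ) ×ˢ Set.Icc c d))) :=
        measure_mono hsub
    _ ≤ (μH[1] ((Set.Icc (g a) (g b) ×ˢ ({c} : Set ℝ)) : Set (ℝ × ℝ)) +
         μH[1] ((Set.Icc (g a) (g b) ×ˢ ({d} : Set ℝ)) : Set (ℝ × ℝ))) +
        (μH[1] ((({g a} : Set ℝ) ×ˢ Set.Icc c d) : Set (ℝ × ℝ)) +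
         μH[1] ((({g b} : Set ℝ) ×ˢ Set.Icc c d) : Set (ℝ × ℝ))) := by
        refine le_trans (measure_union_le _ _) (add_le_add (measure_union_le _ _)
          (measure_union_le _ _))
    _ ≤ (ENNReal.ofReal (g b - g a) + ENNReal.ofReal (g b - g a)) +
        (ENNReal.ofReal (d - c) + ENNReal.ofReal (d - c)) := by
        refine add_le_add (add_le_add (horizSeg _ _ _) (horizSeg _ _ _))
          (add_le_add (vertSeg _ _ _) (vertSeg _ _ _))
    _ ≤ ENNReal.ofReal (2 * (g b - g a) + 2 * (d - c)) := by
        rw [← ENNReal.ofReal_add (by linarith) (by linarith),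
          ← ENNReal.ofReal_add (by linarith) (by linarith),
          ← ENNReal.ofReal_add (by linarith) (by linarith)]
        apply ENNReal.ofReal_le_ofReal; linarith

lemma realId (q a c2 : ℝ) (hc2 : 0 ≤ c2) (K : ℕ) :
    ((2:ℝ)^K) * (((2:ℝ)^K) * ((2:ℝ)^(-(3-q)*(K:ℝ)) * (c2 * ((2:ℝ)^(-(K:ℝ)))^a)^q))
    = c2^q * ((2:ℝ)^(q - 1 - a*q))^K := by
  have h2 : (0:ℝ) < 2 := two_pos
  have e1 : ((2:ℝ)^K) = (2:ℝ)^((K:ℕ):ℝ) := (Real.rpow_natCast 2 K).symm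
  have e2 : ((2:ℝ)^(-(K:ℝ)))^a = (2:ℝ)^(-(K:ℝ)*a) := by
    rw [← Real.rpow_mul h2.le]
  have e3 : (c2 * (2:ℝ)^(-(K:ℝ)*a))^q = c2^q * ((2:ℝ)^(-(K:ℝ)*a))^q :=
    Real.mul_rpow hc2 (Real.rpow_nonneg h2.le _)
  have e4 : ((2:ℝ)^(-(K:ℝ)*a))^q = (2:ℝ)^(-(K:ℝ)*a*q) := by
    rw [← Real.rpow_mul h2.le]
  have e5 : ((2:ℝ)^(q-1-a*q))^K = (2:ℝ)^((q-1-a*q)*(K:ℝ)) := by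
    rw [← Real.rpow_natCast ((2:ℝ)^(q-1-a*q)) K, ← Real.rpow_mul h2.le]
  calc ((2:ℝ)^K) * (((2:ℝ)^K) * ((2:ℝ)^(-(3-q)*(K:ℝ)) * (c2 * ((2:ℝ)^(-(K:ℝ)))^a)^q))
      = c2^q * ((2:ℝ)^((K:ℝ)) * (2:ℝ)^((K:ℝ)) * (2:ℝ)^(-(3-q)*(K:ℝ)) * (2:ℝ)^(-(K:ℝ)*a*q)) := by
        rw [e1, e2, e3, e4]; ring
    _ = c2^q * (2:ℝ)^((K:ℝ) + (K:ℝ) + -(3-q)*(K:ℝ) + -(K:ℝ)*a*q) := by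
        rw [← Real.rpow_add h2, ← Real.rpow_add h2, ← Real.rpow_add h2]
    _ = c2^q * ((2:ℝ)^(q-1-a*q))^K := by
        rw [e5]; congr 1; ring

lemma ladder (k : ℕ) (hk : 2 ≤ k) (C : ℝ → ℝ) (hC0 : C 0 = 0) (hC1 : C 1 = 1)
    (hself1 : ∀ x ∈ Set.Icc (0 : ℝ) ((1 - 1 / (k : ℝ)) / 2),
      C x = (1 / 2) * C (x / ((1 - 1 / (k : ℝ)) / 2)))
    (hself3 : ∀ x ∈ Set.Icc (1 - (1 - 1 / (k : ℝ)) / 2) (1 : ℝ),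
      C x = 1 / 2 + (1 / 2) * C ((x - (1 - (1 - 1 / (k : ℝ)) / 2)) / ((1 - 1 / (k : ℝ)) / 2)))
    (n : ℕ) :
    ∃ u v : ℕ → ℝ,
      (∀ i < 2 ^ n, 0 ≤ u i ∧ u i ≤ v i ∧ v i ≤ 1) ∧
      (∀ i, i + 1 < 2 ^ n → v i ≤ u (i + 1)) ∧
      (∑ i ∈ Finset.range (2 ^ n), (v i - u i)) = (1 - 1 / (k : ℝ)) ^ n ∧
      (∑ i ∈ Finset.range (2 ^ n), (C (v i) - C (u i))) = 1 := by
  have hkR : (2 : ℝ) ≤ (k : ℝ) := by exact_mod_cast hk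
  set l : ℝ := (1 - 1 / (k : ℝ)) / 2 with hl_def
  have h1k : 1 / (k : ℝ) ≤ 1 / 2 := by
    apply one_div_le_one_div_of_le <;> linarith
  have h1k0 : 0 < 1 / (k : ℝ) := by positivity
  have hl0 : 0 < l := by rw [hl_def]; linarith
  have hl2 : l ≤ 1 / 2 := by rw [hl_def]; linarith
  have hCl : ∀ x ∈ Set.Icc (0:ℝ) 1, C (l * x) = (1/2) * C x := by
    intro x hx
    have hm : l * x ∈ Set.Icc (0:ℝ) l :=
      ⟨mul_nonneg hl0.le hx.1, by nlinarith [hx.1, hx.2]⟩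
    have := hself1 (l * x) hm
    rwa [mul_div_cancel_left₀ _ hl0.ne'] at this
  have hCr : ∀ x ∈ Set.Icc (0:ℝ) 1, C (1 - l + l * x) = 1/2 + (1/2) * C x := by
    intro x hx
    have hm : 1 - l + l * x ∈ Set.Icc (1 - l) (1:ℝ) :=
      ⟨by nlinarith [hx.1], by nlinarith [hx.2]⟩
    have := hself3 (1 - l + l * x) hm
    have hx' : (1 - l + l * x - (1 - l)) / l = x := by
      field_simp; ring
    rwa [hx'] at this
  induction n with
  | zero =>
    refine ⟨fun _ => 0, fun _ => 1, ?_, ?_, ?_, ?_⟩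
    · intro i _; exact ⟨le_rfl, zero_le_one, le_rfl⟩
    · intro i hi; omega
    · simp
    · simp [hC0, hC1]
  | succ n ih =>
    obtain ⟨u, v, hb, hc, hs1, hs2⟩ := ih
    have hpow : (2:ℕ) ^ (n+1) = 2 ^ n + 2 ^ n := by ring
    refine ⟨fun i => if i < 2^n then l * u i else 1 - l + l * u (i - 2^n),
            fun i => if i < 2^n then l * v i else 1 - l + l * v (i - 2^n), ?_, ?_, ?_, ?_⟩
    · intro i hi
      by_cases h : i < 2^n
      · obtain ⟨h1, h2, h3⟩ := hb i h
        simp only [if_pos h]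
        exact ⟨mul_nonneg hl0.le h1, by nlinarith, by nlinarith⟩
      · have h' : i - 2^n < 2^n := by omega
        obtain ⟨h1, h2, h3⟩ := hb _ h'
        simp only [if_neg h]
        exact ⟨by nlinarith, by nlinarith, by nlinarith⟩
    · intro i hi
      rcases lt_trichotomy (i+1) (2^n) with h | h | h
      · have hi' : i < 2^n := by omega
        simp only [if_pos h, if_pos hi']
        have := hc i h
        nlinarith
      · have hi' : i < 2^n := by omega
        have hnn : ¬ (i+1 < 2^n) := by omega
        simp only [if_pos hi', if_neg hnn]
        have h0 : 0 ≤ u ((i+1) - 2^n) := by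
          have : (i+1) - 2^n = 0 := by omega
          rw [this]
          exact (hb 0 (by positivity)).1
        have := (hb i hi').2.2
        have := (hb i hi').2.1
        nlinarith
      · have hi1 : ¬ (i < 2^n) := by omega
        have hi2 : ¬ (i + 1 < 2^n) := by omega
        simp only [if_neg hi1, if_neg hi2]
        have harith : (i+1) - 2^n = (i - 2^n) + 1 := by omega
        rw [harith]
        have := hc (i - 2^n) (by omega)
        nlinarith
    · rw [hpow, Finset.sum_range_add]
      have e1 : ∀ i ∈ Finset.range (2^n),
          ((if i < 2^n then l * v i else 1 - l + l * v (i - 2^n)) -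
           (if i < 2^n then l * u i else 1 - l + l * u (i - 2^n))) = l * (v i - u i) := by
        intro i hi
        rw [Finset.mem_range] at hi
        simp only [if_pos hi]; ring
      have e2 : ∀ i ∈ Finset.range (2^n),
          ((if 2^n + i < 2^n then l * v (2^n + i) else 1 - l + l * v ((2^n + i) - 2^n)) -
           (if 2^n + i < 2^n then l * u (2^n + i) else 1 - l + l * u ((2^n + i) - 2^n)))
          = l * (v i - u i) := by
        intro i hi
        have hni : ¬ (2^n + i < 2^n) := by omega
        have : (2^n + i) - 2^n = i := by omega
        simp only [if_neg hni, this]; ring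
      rw [Finset.sum_congr rfl e1, Finset.sum_congr rfl e2, ← Finset.mul_sum, hs1]
      have h2l : (1 - 1 / (k:ℝ)) = 2 * l := by rw [hl_def]; ring
      rw [h2l]; ring
    · rw [hpow, Finset.sum_range_add]
      have e1 : ∀ i ∈ Finset.range (2^n),
          (C (if i < 2^n then l * v i else 1 - l + l * v (i - 2^n)) -
           C (if i < 2^n then l * u i else 1 - l + l * u (i - 2^n)))
          = (1/2) * (C (v i) - C (u i)) := by
        intro i hi
        rw [Finset.mem_range] at hi
        obtain ⟨h1, h2, h3⟩ := hb i hi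
        simp only [if_pos hi]
        rw [hCl (v i) ⟨by linarith, h3⟩, hCl (u i) ⟨h1, by linarith⟩]; ring
      have e2 : ∀ i ∈ Finset.range (2^n),
          (C (if 2^n + i < 2^n then l * v (2^n + i) else 1 - l + l * v ((2^n + i) - 2^n)) -
           C (if 2^n + i < 2^n then l * u (2^n + i) else 1 - l + l * u ((2^n + i) - 2^n)))
          = (1/2) * (C (v i) - C (u i)) := by
        intro i hi
        rw [Finset.mem_range] at hi
        obtain ⟨h1, h2, h3⟩ := hb i hi
        have hni : ¬ (2^n + i < 2^n) := by omega
        have hii : (2^n + i) - 2^n = i := by omega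
        simp only [if_neg hni, hii]
        rw [hCr (v i) ⟨by linarith, h3⟩, hCr (u i) ⟨h1, by linarith⟩]; ring
      rw [Finset.sum_congr rfl e1, Finset.sum_congr rfl e2, ← Finset.mul_sum, hs2]
      ring

set_option maxHeartbeats 2000000 in
theorem stmt_10 (k : ℕ) (hk : 2 ≤ k) (q : ℝ) (hq : 0 < q) (C : ℝ → ℝ) (M : ℝ≥0)
    (hCc : ContinuousOn C (Set.Icc 0 1)) (hCm : MonotoneOn C (Set.Icc 0 1))
    (hC0 : C 0 = 0) (hC1 : C 1 = 1)
    (hself1 : ∀ x ∈ Set.Icc (0 : ℝ) ((1 - 1 / (k : ℝ)) / 2),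
      C x = (1 / 2) * C (x / ((1 - 1 / (k : ℝ)) / 2)))
    (hself2 : ∀ x ∈ Set.Icc ((1 - 1 / (k : ℝ)) / 2) (1 - (1 - 1 / (k : ℝ)) / 2), C x = 1 / 2)
    (hself3 : ∀ x ∈ Set.Icc (1 - (1 - 1 / (k : ℝ)) / 2) (1 : ℝ),
      C x = 1 / 2 + (1 / 2) * C ((x - (1 - (1 - 1 / (k : ℝ)) / 2)) / ((1 - 1 / (k : ℝ)) / 2)))
    (hHolder : HolderOnWith M
      (Real.toNNReal (Real.log (1 / 2) / Real.log ((1 / 2) * (1 - 1 / (k : ℝ)))))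
      C (Set.Icc 0 1))
    (hqα : q * (1 - Real.log (1 / 2) / Real.log ((1 / 2) * (1 - 1 / (k : ℝ)))) < 1) :
    (∑' k' : ℕ, ∑' i : Fin (2 ^ k'), ∑' j : Fin (2 ^ k'),
        ENNReal.ofReal ((2 : ℝ) ^ (-(3 - q) * (k' : ℝ))) *
          (μH[1] ((fun p : ℝ × ℝ => (p.1 + C p.1, p.2)) '' frontier (dyadicSq k' i j))) ^ q)
        < ⊤ ∧
    ContinuousOn (fun p : ℝ × ℝ => (p.1 + C p.1, p.2)) (Set.Icc (0:ℝ) 1 ×ˢ Set.Icc (0:ℝ) 1) ∧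
    Set.InjOn (fun p : ℝ × ℝ => (p.1 + C p.1, p.2)) (Set.Icc (0:ℝ) 1 ×ˢ Set.Icc (0:ℝ) 1) ∧
    ¬ AbsContOn (fun x => x + C x) 0 1 := by
  have hkR : (2 : ℝ) ≤ (k : ℝ) := by exact_mod_cast hk
  have h1k : 1 / (k : ℝ) ≤ 1 / 2 := by
    apply one_div_le_one_div_of_le <;> linarith
  have h1k0 : 0 < 1 / (k : ℝ) := by positivity
  set α : ℝ := Real.log (1 / 2) / Real.log ((1 / 2) * (1 - 1 / (k : ℝ))) with hα_def
  have ht0 : (0:ℝ) < (1/2) * (1 - 1/(k:ℝ)) := by nlinarith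
  have hlogt : Real.log ((1/2) * (1 - 1/(k:ℝ))) < 0 := Real.log_neg ht0 (by nlinarith)
  have hlog2 : Real.log (1/2 : ℝ) < 0 := Real.log_neg (by norm_num) (by norm_num)
  have hle : Real.log ((1/2) * (1 - 1/(k:ℝ))) ≤ Real.log (1/2 : ℝ) :=
    Real.log_le_log ht0 (by nlinarith)
  have hα0 : 0 < α := div_pos_of_neg_of_neg hlog2 hlogt
  have hα1 : α ≤ 1 := by
    rw [hα_def, div_le_one_iff]
    exact Or.inr (Or.inr ⟨hlogt, hle⟩)
  have hrα : ((Real.toNNReal α : ℝ≥0) : ℝ) = α := Real.coe_toNNReal _ hα0.le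
  -- monotonicity of g
  have hgm : MonotoneOn (fun x : ℝ => x + C x) (Set.Icc 0 1) :=
    fun x hx y hy hxy => add_le_add hxy (hCm hx hy hxy)
  -- Hölder estimate
  have hHold : ∀ a b : ℝ, a ∈ Set.Icc (0:ℝ) 1 → b ∈ Set.Icc (0:ℝ) 1 → a ≤ b →
      C b - C a ≤ (M : ℝ) * (b - a) ^ α := by
    intro a b ha hb hab
    have h := hHolder.edist_le hb ha
    rw [edist_dist, edist_dist] at h
    have hM : (M : ℝ≥0∞) = ENNReal.ofReal (M : ℝ) := ENNReal.ofReal_coe_nnreal.symm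
    rw [hM, ENNReal.ofReal_rpow_of_nonneg dist_nonneg ((α.toNNReal).coe_nonneg),
      ← ENNReal.ofReal_mul (M.coe_nonneg)] at h
    have h2 := (ENNReal.ofReal_le_ofReal_iff
      (mul_nonneg M.coe_nonneg (Real.rpow_nonneg dist_nonneg _))).1 h
    have hd : dist b a = b - a := by rw [Real.dist_eq, abs_of_nonneg (by linarith)]
    calc C b - C a ≤ |C b - C a| := le_abs_self _
      _ = dist (C b) (C a) := (Real.dist_eq _ _).symm
      _ ≤ (M:ℝ) * dist b a ^ (((Real.toNNReal α : ℝ≥0)) : ℝ) := h2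
      _ = (M:ℝ) * (b - a) ^ α := by rw [hrα, hd]
  refine ⟨?_, ?_, ?_, ?_⟩
  · -- summability
    set c2 : ℝ := 4 + 2 * (M : ℝ) with hc2_def
    have hc2 : 0 ≤ c2 := by positivity
    have hsq : ∀ (K : ℕ) (i j : Fin (2 ^ K)),
        μH[1] ((fun p : ℝ × ℝ => (p.1 + C p.1, p.2)) '' frontier (dyadicSq K i j)) ≤
          ENNReal.ofReal (c2 * ((2:ℝ) ^ (-(K:ℝ))) ^ α) := by
      intro K i j
      set L : ℝ := (2:ℝ) ^ (-(K:ℝ)) with hL_def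
      have hL0 : 0 < L := Real.rpow_pos_of_pos two_pos _
      have hL1 : L ≤ 1 := Real.rpow_le_one_of_one_le_of_nonpos one_le_two
        (neg_nonpos.2 (Nat.cast_nonneg K))
      have hLα : L ≤ L ^ α := by
        calc L = L ^ (1:ℝ) := (Real.rpow_one L).symm
          _ ≤ L ^ α := Real.rpow_le_rpow_of_exponent_ge hL0 hL1 hα1
      set a : ℝ := ((i:ℕ) : ℝ) / 2 ^ K with ha_def
      set b : ℝ := (((i:ℕ) : ℝ) + 1) / 2 ^ K with hb_def
      have hpK : (0:ℝ) < 2 ^ K := by positivity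
      have hiK : ((i:ℕ) : ℝ) + 1 ≤ 2 ^ K := by
        have h' : ((i:ℕ) : ℝ) + 1 ≤ ((2^K : ℕ) : ℝ) := by
          exact_mod_cast Nat.succ_le_of_lt i.isLt
        simpa using h'
      have hjK : ((j:ℕ) : ℝ) + 1 ≤ 2 ^ K := by
        have h' : ((j:ℕ) : ℝ) + 1 ≤ ((2^K : ℕ) : ℝ) := by
          exact_mod_cast Nat.succ_le_of_lt j.isLt
        simpa using h'
      have hab : a ≤ b := by rw [ha_def, hb_def]; gcongr; linarith
      have hcd : ((j:ℕ) : ℝ) / 2 ^ K ≤ (((j:ℕ) : ℝ) + 1) / 2 ^ K := by gcongr; linarith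
      have ha01 : a ∈ Set.Icc (0:ℝ) 1 := ⟨by positivity, by rw [ha_def, div_le_one hpK]; linarith⟩
      have hb01 : b ∈ Set.Icc (0:ℝ) 1 := ⟨by positivity, by rw [hb_def, div_le_one hpK]; exact hiK⟩
      have hpow2 : (1:ℝ) / 2 ^ K = L := by
        rw [hL_def, Real.rpow_neg (by norm_num : (0:ℝ) ≤ 2), Real.rpow_natCast, one_div]
      have hbma : b - a = L := by
        rw [hb_def, ha_def, div_sub_div_same, add_sub_cancel_left, ← hpow2]
      have hdc : (((j:ℕ) : ℝ) + 1) / 2 ^ K - ((j:ℕ) : ℝ) / 2 ^ K = L := by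
        rw [div_sub_div_same, add_sub_cancel_left, ← hpow2]
      have hC := hHold a b ha01 hb01 hab
      rw [hbma] at hC
      calc μH[1] ((fun p : ℝ × ℝ => (p.1 + C p.1, p.2)) '' frontier (dyadicSq K i j))
          ≤ ENNReal.ofReal (2 * ((b + C b) - (a + C a)) +
              2 * ((((j:ℕ) : ℝ) + 1) / 2 ^ K - ((j:ℕ) : ℝ) / 2 ^ K)) := by
            have h' := frontier_image_bound (fun x => x + C x) hgm a b
              (((j:ℕ) : ℝ) / 2 ^ K) ((((j:ℕ) : ℝ) + 1) / 2 ^ K) hab hcd ha01 hb01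
            simpa [dyadicSq, ha_def, hb_def] using h'
        _ ≤ ENNReal.ofReal (c2 * L ^ α) := by
            apply ENNReal.ofReal_le_ofReal
            have hMn : (0:ℝ) ≤ (M:ℝ) := M.coe_nonneg
            have h1 : (M:ℝ) * L ^ α ≤ (M:ℝ) * L ^ α := le_rfl
            rw [hdc, hc2_def]
            have hba : b - a = L := hbma
            nlinarith [hLα, hC, hMn, hL0.le]
    -- termwise bound and summation
    have hterm : ∀ (K : ℕ) (i j : Fin (2^K)),
        ENNReal.ofReal ((2 : ℝ) ^ (-(3 - q) * (K : ℝ))) *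
          (μH[1] ((fun p : ℝ × ℝ => (p.1 + C p.1, p.2)) '' frontier (dyadicSq K i j))) ^ q ≤
        ENNReal.ofReal ((2:ℝ) ^ (-(3-q)*(K:ℝ)) * (c2 * ((2:ℝ) ^ (-(K:ℝ))) ^ α) ^ q) := by
      intro K i j
      rw [ENNReal.ofReal_mul (Real.rpow_nonneg (by norm_num : (0:ℝ) ≤ 2) _)]
      refine mul_le_mul_right ?_ _
      rw [← ENNReal.ofReal_rpow_of_nonneg (by positivity) hq.le]
      exact ENNReal.rpow_le_rpow (hsq K i j) hq.le
    have hcast : ∀ K : ℕ, ((2^K : ℕ) : ℝ≥0∞) = ENNReal.ofReal ((2:ℝ)^K) := by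
      intro K
      rw [← ENNReal.ofReal_natCast (2^K)]
      norm_num
    have hKb : ∀ K : ℕ, (∑' i : Fin (2 ^ K), ∑' j : Fin (2 ^ K),
        ENNReal.ofReal ((2 : ℝ) ^ (-(3 - q) * (K : ℝ))) *
          (μH[1] ((fun p : ℝ × ℝ => (p.1 + C p.1, p.2)) '' frontier (dyadicSq K i j))) ^ q) ≤
        ENNReal.ofReal (c2^q) * (ENNReal.ofReal ((2:ℝ)^(q - 1 - α*q)))^K := by
      intro K
      refine le_trans (ENNReal.tsum_le_tsum (fun i => ENNReal.tsum_le_tsum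
        (fun j => hterm K i j))) (le_of_eq ?_)
      simp only [tsum_fintype, Finset.sum_const, Finset.card_univ, Fintype.card_fin,
        nsmul_eq_mul]
      rw [hcast, ← ENNReal.ofReal_mul (by positivity), ← ENNReal.ofReal_mul (by positivity),
        ← ENNReal.ofReal_pow (Real.rpow_nonneg (by norm_num : (0:ℝ) ≤ 2) _),
        ← ENNReal.ofReal_mul (by positivity)]
      exact congrArg ENNReal.ofReal (realId q α c2 hc2 K)
    have hr1 : ENNReal.ofReal ((2:ℝ)^(q - 1 - α*q)) < 1 := by
      rw [ENNReal.ofReal_lt_one]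
      apply Real.rpow_lt_one_of_one_lt_of_neg one_lt_two
      nlinarith
    calc (∑' k' : ℕ, ∑' i : Fin (2 ^ k'), ∑' j : Fin (2 ^ k'),
        ENNReal.ofReal ((2 : ℝ) ^ (-(3 - q) * (k' : ℝ))) *
          (μH[1] ((fun p : ℝ × ℝ => (p.1 + C p.1, p.2)) '' frontier (dyadicSq k' i j))) ^ q)
        ≤ ∑' K : ℕ, ENNReal.ofReal (c2^q) * (ENNReal.ofReal ((2:ℝ)^(q - 1 - α*q)))^K :=
          ENNReal.tsum_le_tsum hKb
      _ = ENNReal.ofReal (c2^q) * ∑' K : ℕ, (ENNReal.ofReal ((2:ℝ)^(q - 1 - α*q)))^K :=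
          ENNReal.tsum_mul_left
      _ < ⊤ := by
          rw [ENNReal.tsum_geometric]
          exact ENNReal.mul_lt_top ENNReal.ofReal_lt_top
            (ENNReal.inv_lt_top.2 (tsub_pos_of_lt hr1))
  · -- continuity
    exact (continuousOn_fst.add (hCc.comp continuousOn_fst (fun p hp => hp.1))).prodMk
      continuousOn_snd
  · -- injectivity
    have hsm : StrictMonoOn (fun x : ℝ => x + C x) (Set.Icc 0 1) := by
      intro x hx y hy hxy
      have := hCm hx hy hxy.le
      simpa using add_lt_add_of_lt_of_le hxy this
    intro p hp p' hp' h
    simp only [Prod.mk.injEq] at h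
    have h3 : p.1 = p'.1 := hsm.injOn hp.1 hp'.1 h.1
    exact Prod.ext h3 h.2
  · -- not absolutely continuous
    intro hac
    obtain ⟨δ, hδ, H⟩ := hac 1 one_pos
    have hlt1 : (1 - 1/(k:ℝ)) < 1 := by linarith
    have hge0 : (0:ℝ) ≤ 1 - 1/(k:ℝ) := by linarith
    obtain ⟨n, hn⟩ := exists_pow_lt_of_lt_one hδ hlt1
    obtain ⟨u, v, hb, hc, hs1, hs2⟩ := ladder k hk C hC0 hC1 hself1 hself3 n
    have hsum := H (2^n) u v hb hc (by rw [hs1]; exact hn)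
    have hge : (1:ℝ) ≤ ∑ i ∈ Finset.range (2^n), |(v i + C (v i)) - (u i + C (u i))| := by
      rw [← hs2]
      apply Finset.sum_le_sum
      intro i hi
      rw [Finset.mem_range] at hi
      obtain ⟨h1, h2, h3⟩ := hb i hi
      have hCmono : C (u i) ≤ C (v i) := hCm ⟨h1, by linarith⟩ ⟨by linarith, h3⟩ h2
      rw [abs_of_nonneg (by linarith)]
      linarith
    simp only at hsum
    linarith

end
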